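/- arXiv:2309.08678 — 2 statements merged into one kernel-verified Lean document; each statement's English description precedes it below -/
import Mathlib

section
/- Let ε > 0 be a real number and C ≥ 2 a natural number, and let P be the C×C randomized response distortion matrix with entries e^ε/(C−1+e^ε) on the diagonal and 1/(C−1+e^ε) off the diagonal. Let q ∈ ℝ^C be a probability vector (nonnegative entries summing to 1) representing the true label distribution, and for any probability vector r let rᵀP denote the vector with v-th entry Σ_u r_u P_{u v}, which is the distribution of the noisy label when the clean label is drawn from r. Then for every probability vector q' ∈ ℝ^C, the forward-corrected expected cross-entropy loss under the noisy label distribution satisfies −Σ_v (qᵀP)_v · log((q'ᵀP)_v) ≥ −Σ_v (qᵀP)_v · log((qᵀP)_v), with equality if and only if q' = q. In particular, the forward-corrected expected loss is minimized over probability vectors exactly at the true distribution q. -/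
/-- Gibbs' inequality with equality characterization. -/
lemma gibbs_aux {n : ℕ} (a b : Fin n → ℝ) (ha : ∀ v, 0 < a v) (hb : ∀ v, 0 < b v)
    (hab : ∑ v, a v = ∑ v, b v) :
    (∑ v, a v * Real.log (b v) ≤ ∑ v, a v * Real.log (a v)) ∧
      ((∑ v, a v * Real.log (b v) = ∑ v, a v * Real.log (a v)) ↔ b = a) := by
  have key : ∀ v : Fin n, a v * Real.log (b v) - a v * Real.log (a v) ≤ b v - a v := by
    intro v
    have h1 : Real.log (b v / a v) ≤ b v / a v - 1 :=
      Real.log_le_sub_one_of_pos (div_pos (hb v) (ha v))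
    have h2 : Real.log (b v / a v) = Real.log (b v) - Real.log (a v) :=
      Real.log_div (ne_of_gt (hb v)) (ne_of_gt (ha v))
    have h3 : a v * Real.log (b v / a v) ≤ a v * (b v / a v - 1) :=
      mul_le_mul_of_nonneg_left h1 (le_of_lt (ha v))
    have h4 : a v * (b v / a v - 1) = b v - a v := by
      have hne := ne_of_gt (ha v); field_simp
    rw [h2, mul_sub] at h3
    linarith
  have keystrict : ∀ v : Fin n, b v ≠ a v →
      a v * Real.log (b v) - a v * Real.log (a v) < b v - a v := by
    intro v hne
    have hba : b v / a v ≠ 1 := by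
      intro h
      exact hne ((div_eq_one_iff_eq (ne_of_gt (ha v))).mp h)
    have h1 : Real.log (b v / a v) < b v / a v - 1 :=
      Real.log_lt_sub_one_of_pos (div_pos (hb v) (ha v)) hba
    have h2 : Real.log (b v / a v) = Real.log (b v) - Real.log (a v) :=
      Real.log_div (ne_of_gt (hb v)) (ne_of_gt (ha v))
    have h3 : a v * Real.log (b v / a v) < a v * (b v / a v - 1) :=
      (mul_lt_mul_iff_right₀ (ha v)).2 h1
    have h4 : a v * (b v / a v - 1) = b v - a v := by
      have hne2 := ne_of_gt (ha v); field_simp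
    rw [h2, mul_sub] at h3
    linarith
  have hsum : ∑ v, (a v * Real.log (b v) - a v * Real.log (a v)) ≤ ∑ v, (b v - a v) :=
    Finset.sum_le_sum fun v _ => key v
  have hzero : ∑ v : Fin n, (b v - a v) = 0 := by
    rw [Finset.sum_sub_distrib, hab]; ring
  rw [Finset.sum_sub_distrib] at hsum
  constructor
  · linarith
  · constructor
    · intro heq
      by_contra hne
      obtain ⟨v, hv⟩ : ∃ v, b v ≠ a v := by
        by_contra h
        push_neg at h
        exact hne (funext h)
      have : ∑ v, (a v * Real.log (b v) - a v * Real.log (a v)) < ∑ v, (b v - a v) :=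
        Finset.sum_lt_sum (fun u _ => key u) ⟨v, Finset.mem_univ v, keystrict v hv⟩
      rw [Finset.sum_sub_distrib] at this
      linarith
    · intro h; rw [h]

/-- Forward loss correction: the forward-corrected expected cross-entropy loss
under the noisy label distribution is minimized exactly at the true clean
distribution `q`. -/
theorem flc_minimizer (ε : ℝ) (hε : 0 < ε) (C : ℕ) (hC : 2 ≤ C)
    (P : Fin C → Fin C → ℝ)
    (hP : ∀ u v : Fin C,
      P u v = if u = v then Real.exp ε / ((C : ℝ) - 1 + Real.exp ε)
              else 1 / ((C : ℝ) - 1 + Real.exp ε))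
    (q : Fin C → ℝ) (hq : ∀ v, 0 ≤ q v) (hqsum : ∑ v, q v = 1) :
    ∀ q' : Fin C → ℝ, (∀ v, 0 ≤ q' v) → (∑ v, q' v = 1) →
      (-∑ v, (∑ u, q u * P u v) * Real.log (∑ u, q' u * P u v) ≥
        -∑ v, (∑ u, q u * P u v) * Real.log (∑ u, q u * P u v)) ∧
      ((-∑ v, (∑ u, q u * P u v) * Real.log (∑ u, q' u * P u v) =
        -∑ v, (∑ u, q u * P u v) * Real.log (∑ u, q u * P u v)) ↔ q' = q) := by
  intro q' hq' hq'sum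
  set D : ℝ := (C : ℝ) - 1 + Real.exp ε with hD
  have hCge : (2 : ℝ) ≤ (C : ℝ) := by exact_mod_cast hC
  have hDpos : 0 < D := by
    have := Real.exp_pos ε
    rw [hD]; linarith
  have hexp : 1 < Real.exp ε := by
    have := Real.add_one_le_exp ε; linarith
  have key : ∀ r : Fin C → ℝ, (∑ v, r v = 1) → ∀ v : Fin C,
      (∑ u, r u * P u v) = (1 + (Real.exp ε - 1) * r v) / D := by
    intro r hr v
    have : ∀ u : Fin C, r u * P u v =
        r u * (1 / D) + (if u = v then r u * ((Real.exp ε - 1) / D) else 0) := by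
      intro u
      rw [hP u v]
      by_cases h : u = v <;> simp [h] <;> ring
    rw [Finset.sum_congr rfl (fun u _ => this u), Finset.sum_add_distrib,
      Finset.sum_ite_eq' Finset.univ v (fun u => r u * ((Real.exp ε - 1) / D)),
      if_pos (Finset.mem_univ v), ← Finset.sum_mul, hr]
    field_simp
  have hkq := key q hqsum
  have hkq' := key q' hq'sum
  have hpos : ∀ (r : Fin C → ℝ), (∀ v, 0 ≤ r v) →
      ∀ v, 0 < (1 + (Real.exp ε - 1) * r v) / D := by
    intro r hr v
    apply div_pos _ hDpos
    have : 0 ≤ (Real.exp ε - 1) * r v := mul_nonneg (by linarith) (hr v)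
    linarith
  set a : Fin C → ℝ := fun v => (1 + (Real.exp ε - 1) * q v) / D with ha
  set b : Fin C → ℝ := fun v => (1 + (Real.exp ε - 1) * q' v) / D with hb
  have hasum : ∑ v, a v = ∑ v, b v := by
    rw [ha, hb]
    simp only [div_eq_mul_inv, ← Finset.sum_mul, Finset.sum_add_distrib,
      ← Finset.mul_sum, hqsum, hq'sum]
  have hgibbs := gibbs_aux a b (hpos q hq) (hpos q' hq') hasum
  have e1 : (∑ v, (∑ u, q u * P u v) * Real.log (∑ u, q' u * P u v)) =
      ∑ v, a v * Real.log (b v) := by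
    apply Finset.sum_congr rfl; intro v _; rw [hkq v, hkq' v]
  have e2 : (∑ v, (∑ u, q u * P u v) * Real.log (∑ u, q u * P u v)) =
      ∑ v, a v * Real.log (a v) := by
    apply Finset.sum_congr rfl; intro v _; rw [hkq v]
  rw [e1, e2]
  obtain ⟨hle, hiff⟩ := hgibbs
  refine ⟨by linarith, ?_⟩
  rw [neg_inj, hiff]
  constructor
  · intro h
    funext v
    have := congrFun h v
    rw [hb, ha] at this
    simp only at this
    have hD' : D ≠ 0 := ne_of_gt hDpos
    field_simp at this
    have h1 : (Real.exp ε - 1) * q' v = (Real.exp ε - 1) * q v := by linarith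
    exact mul_left_cancel₀ (sub_ne_zero.mpr (ne_of_gt hexp)) h1
  · intro h; rw [hb, ha, h]
end

section
/- Let ε > 0 be a real number and C ≥ 2 a natural number, and let P be the C×C randomized response distortion matrix with entries e^ε/(C−1+e^ε) on the diagonal and 1/(C−1+e^ε) off the diagonal. Let q ∈ ℝ^C be a probability vector with all entries strictly positive (the true label distribution), let w ∈ [0,1] represent the fraction of non-perturbed data, and for a probability vector r let rᵀP denote the vector with v-th entry Σ_u r_u P_{u v}. Then for every probability vector q' ∈ ℝ^C with all entries strictly positive, the adjusted forward-corrected expected loss satisfies w · (−Σ_v q_v log q'_v) + (1−w) · (−Σ_v (qᵀP)_v log((q'ᵀP)_v)) ≥ w · (−Σ_v q_v log q_v) + (1−w) · (−Σ_v (qᵀP)_v log((qᵀP)_v)), with equality if and only if q' = q. In particular, the minimizer of the adjusted forward-corrected loss — which applies the standard cross-entropy loss on the clean fraction w of the data and the P-corrected cross-entropy loss on the noisy fraction 1−w — coincides with the minimizer of the original cross-entropy loss under the fully clean distribution, which is the content of the paper's Theorem 1. -/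
open Finset in
/-- Gibbs' inequality with strictness when `p ≠ r`. -/
lemma gibbs_aux_s10 {C : ℕ} (p r : Fin C → ℝ) (hp : ∀ v, 0 < p v) (hr : ∀ v, 0 < r v)
    (hps : ∑ v, p v = 1) (hrs : ∑ v, r v = 1) :
    (∑ v, p v * Real.log (r v) ≤ ∑ v, p v * Real.log (p v)) ∧
    (p ≠ r → ∑ v, p v * Real.log (r v) < ∑ v, p v * Real.log (p v)) := by
  have key : ∀ v : Fin C, p v * Real.log (r v) - p v * Real.log (p v) ≤ r v - p v := by
    intro v
    have h1 : Real.log (r v / p v) ≤ r v / p v - 1 :=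
      Real.log_le_sub_one_of_pos (div_pos (hr v) (hp v))
    have h2 : Real.log (r v / p v) = Real.log (r v) - Real.log (p v) :=
      Real.log_div (ne_of_gt (hr v)) (ne_of_gt (hp v))
    have := mul_le_mul_of_nonneg_left h1 (le_of_lt (hp v))
    rw [h2] at this
    have hpv := (hp v).ne'
    calc p v * Real.log (r v) - p v * Real.log (p v)
        = p v * (Real.log (r v) - Real.log (p v)) := by ring
      _ ≤ p v * (r v / p v - 1) := this
      _ = r v - p v := by field_simp
  have keystrict : ∀ v : Fin C, p v ≠ r v →
      p v * Real.log (r v) - p v * Real.log (p v) < r v - p v := by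
    intro v hne
    have hdiv : r v / p v ≠ 1 := by
      intro h
      rw [div_eq_one_iff_eq (hp v).ne'] at h
      exact hne h.symm
    have h1 : Real.log (r v / p v) < r v / p v - 1 :=
      Real.log_lt_sub_one_of_pos (div_pos (hr v) (hp v)) hdiv
    have h2 : Real.log (r v / p v) = Real.log (r v) - Real.log (p v) :=
      Real.log_div (ne_of_gt (hr v)) (ne_of_gt (hp v))
    have := mul_lt_mul_of_pos_left h1 (hp v)
    rw [h2] at this
    have hpv := (hp v).ne'
    calc p v * Real.log (r v) - p v * Real.log (p v)
        = p v * (Real.log (r v) - Real.log (p v)) := by ring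
      _ < p v * (r v / p v - 1) := this
      _ = r v - p v := by field_simp
  constructor
  · have h := Finset.sum_le_sum (s := Finset.univ) (fun v _ => key v)
    rw [Finset.sum_sub_distrib] at h
    simp only [Finset.sum_sub_distrib, hps, hrs] at h
    linarith
  · intro hne
    obtain ⟨v0, hv0⟩ : ∃ v, p v ≠ r v := by
      by_contra h
      push_neg at h
      exact hne (funext h)
    have h := Finset.sum_lt_sum (fun v _ => key v) ⟨v0, Finset.mem_univ v0, keystrict v0 hv0⟩
    rw [Finset.sum_sub_distrib] at h
    simp only [Finset.sum_sub_distrib, hps, hrs] at h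
    linarith

/-- Adjusted forward loss correction (paper's Theorem 1): with a clean fraction
`w` of the data receiving the standard cross-entropy loss and the noisy fraction
`1 - w` receiving the `P`-corrected cross-entropy loss, the adjusted
forward-corrected expected loss is minimized exactly at the true distribution `q`. -/
theorem adjusted_flc_minimizer (ε : ℝ) (hε : 0 < ε) (C : ℕ) (hC : 2 ≤ C)
    (P : Fin C → Fin C → ℝ)
    (hP : ∀ u v : Fin C,
      P u v = if u = v then Real.exp ε / ((C : ℝ) - 1 + Real.exp ε)
              else 1 / ((C : ℝ) - 1 + Real.exp ε))
    (q : Fin C → ℝ) (hq : ∀ v, 0 < q v) (hqsum : ∑ v, q v = 1)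
    (w : ℝ) (hw0 : 0 ≤ w) (hw1 : w ≤ 1) :
    ∀ q' : Fin C → ℝ, (∀ v, 0 < q' v) → (∑ v, q' v = 1) →
      (w * (-∑ v, q v * Real.log (q' v)) +
          (1 - w) * (-∑ v, (∑ u, q u * P u v) * Real.log (∑ u, q' u * P u v)) ≥
        w * (-∑ v, q v * Real.log (q v)) +
          (1 - w) * (-∑ v, (∑ u, q u * P u v) * Real.log (∑ u, q u * P u v))) ∧
      ((w * (-∑ v, q v * Real.log (q' v)) +
          (1 - w) * (-∑ v, (∑ u, q u * P u v) * Real.log (∑ u, q' u * P u v)) =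
        w * (-∑ v, q v * Real.log (q v)) +
          (1 - w) * (-∑ v, (∑ u, q u * P u v) * Real.log (∑ u, q u * P u v))) ↔
        q' = q) := by
  intro q' hq' hq'sum
  set D : ℝ := (C : ℝ) - 1 + Real.exp ε with hD
  have hC1 : (2 : ℝ) ≤ (C : ℝ) := by exact_mod_cast hC
  have hDpos : 0 < D := by
    have := Real.exp_pos ε
    simp only [hD]; linarith
  set b : ℝ := 1 / D with hb
  set lam : ℝ := (Real.exp ε - 1) / D with hlam
  have hbpos : 0 < b := by positivity
  have hlampos : 0 < lam := by
    apply div_pos _ hDpos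
    have := Real.exp_lt_exp.mpr (show (0:ℝ) < ε from hε)
    rw [Real.exp_zero] at this
    linarith
  -- key simplification of the transformed distributions
  have hsum : ∀ (r : Fin C → ℝ), (∑ v, r v = 1) → ∀ v : Fin C,
      (∑ u, r u * P u v) = b + lam * r v := by
    intro r hrs v
    have : ∀ u : Fin C, r u * P u v = r u * b + (if u = v then lam * r v else 0) := by
      intro u
      rw [hP u v]
      by_cases h : u = v
      · subst h
        simp only [if_pos rfl, hb, hlam, eq_self_iff_true, if_true]
        field_simp
        ring
      · simp only [if_neg h, hb]
        ring
    rw [Finset.sum_congr rfl (fun u _ => this u)]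
    rw [Finset.sum_add_distrib, ← Finset.sum_mul, hrs, Finset.sum_ite_eq']
    simp
  have htsum : ∀ (r : Fin C → ℝ), (∑ v, r v = 1) → ∑ v, (b + lam * r v) = 1 := by
    intro r hrs
    rw [Finset.sum_add_distrib, ← Finset.mul_sum, hrs]
    simp only [Finset.sum_const, Finset.card_univ, Fintype.card_fin, nsmul_eq_mul,
      hb, hlam]
    field_simp
    ring
  have htpos : ∀ (r : Fin C → ℝ), (∀ v, 0 < r v) → ∀ v, 0 < b + lam * r v := by
    intro r hr v
    have := hr v
    nlinarith
  -- rewrite the noisy sums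
  have hrw : ∀ v, (∑ u, q u * P u v) = b + lam * q v := hsum q hqsum
  have hrw' : ∀ v, (∑ u, q' u * P u v) = b + lam * q' v := hsum q' hq'sum
  simp only [hrw, hrw']
  -- Gibbs for clean term
  obtain ⟨hA, hAs⟩ := gibbs_aux_s10 q q' hq hq' hqsum hq'sum
  obtain ⟨hB, hBs⟩ := gibbs_aux_s10 (fun v => b + lam * q v) (fun v => b + lam * q' v)
    (htpos q hq) (htpos q' hq') (htsum q hqsum) (htsum q' hq'sum)
  constructor
  · have h1 : w * (-∑ v, q v * Real.log (q' v)) ≥ w * (-∑ v, q v * Real.log (q v)) := by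
      apply mul_le_mul_of_nonneg_left _ hw0
      linarith
    have h2 : (1 - w) * (-∑ v, (b + lam * q v) * Real.log (b + lam * q' v)) ≥
        (1 - w) * (-∑ v, (b + lam * q v) * Real.log (b + lam * q v)) := by
      apply mul_le_mul_of_nonneg_left _ (by linarith)
      linarith
    linarith
  · constructor
    · intro heq
      by_contra hne
      have hne' : q ≠ q' := fun h => hne h.symm
      have hA' := hAs hne'
      have hB' := hBs (by
        intro h
        apply hne'
        funext v
        have := congrFun h v
        have : lam * q v = lam * q' v := by linarith
        exact mul_left_cancel₀ (ne_of_gt hlampos) this)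
      -- w * ΔA + (1-w) * ΔB > 0 where ΔA, ΔB > 0
      rcases eq_or_lt_of_le hw1 with hweq | hwlt
      · subst hweq
        simp only [sub_self, zero_mul, one_mul, add_zero] at heq
        linarith
      · have h2 : 0 < (1 - w) * ((∑ v, (b + lam * q v) * Real.log (b + lam * q v)) -
            ∑ v, (b + lam * q v) * Real.log (b + lam * q' v)) :=
          mul_pos (by linarith) (by linarith)
        have h1 : 0 ≤ w * ((∑ v, q v * Real.log (q v)) - ∑ v, q v * Real.log (q' v)) :=
          mul_nonneg hw0 (by linarith)
        nlinarith [h1, h2]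
    · intro h
      subst h
      rfl
end
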